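/- Let λ ∈ (0, π/2), α ∈ ℝ with cos α ≠ 0 and sin α ≠ 0, and suppose there exist a nonzero complex number L and real ω such that (√2/2)·e^{−iω}·sin λ = i L sin α and (√2/2)·cos λ = L cos α. Then L is real, L = ±√2/2, ω = π/2 or ω = 3π/2, and |tan λ| = |tan α|. -/

import Mathlib

open Real Complex

set_option maxHeartbeats 800000 in

theorem povm_parameter_constraints (lam α : ℝ)
    (hlam : lam ∈ Set.Ioo 0 (π / 2))
    (hcos : Real.cos α ≠ 0) (hsin : Real.sin α ≠ 0)
    (L : ℂ) (hL : L ≠ 0) (ω : ℝ) (hω : ω ∈ Set.Ico 0 (2 * π))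
    (h₁ : (Real.sqrt 2 / 2 : ℂ) * Complex.exp (-(ω : ℂ) * Complex.I)
        * (Real.sin lam : ℂ) = Complex.I * L * (Real.sin α : ℂ))
    (h₂ : (Real.sqrt 2 / 2 : ℂ) * (Real.cos lam : ℂ) = L * (Real.cos α : ℂ)) :
    L.im = 0 ∧ (L = (Real.sqrt 2 / 2 : ℂ) ∨ L = -(Real.sqrt 2 / 2 : ℂ)) ∧
      (ω = π / 2 ∨ ω = 3 * π / 2) ∧
      |Real.tan lam| = |Real.tan α| := by
  obtain ⟨hlam1, hlam2⟩ := hlam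
  have hpi := Real.pi_pos
  have hsl : Real.sin lam > 0 := Real.sin_pos_of_pos_of_lt_pi hlam1 (by linarith)
  have hcl : Real.cos lam > 0 := Real.cos_pos_of_mem_Ioo ⟨by linarith, hlam2⟩
  have hs2 : Real.sqrt 2 > 0 := Real.sqrt_pos.mpr (by norm_num)
  have hs2sq : Real.sqrt 2 * Real.sqrt 2 = 2 := Real.mul_self_sqrt (by norm_num)
  have hexp : Complex.exp (-(ω : ℂ) * Complex.I) = (Real.cos ω : ℂ) - (Real.sin ω : ℂ) * Complex.I := by
    rw [Complex.exp_mul_I]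
    simp [Complex.cos_neg, Complex.sin_neg, ← Complex.ofReal_cos, ← Complex.ofReal_sin]
    ring
  rw [hexp] at h₁
  have h2re := congrArg Complex.re h₂
  have h2im := congrArg Complex.im h₂
  have h1re := congrArg Complex.re h₁
  have h1im := congrArg Complex.im h₁
  simp [Complex.ext_iff, Complex.cos_ofReal_re, Complex.sin_ofReal_re] at h2re h2im h1re h1im
  have him : L.im = 0 := by
    rcases h2im with h | h
    · exact h
    · exact absurd h hcos
  rw [him] at h1re
  have hcw : Real.cos ω = 0 := by
    have h0 : Real.sqrt 2 / 2 * Real.cos ω * Real.sin lam = 0 := by linarith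
    rcases mul_eq_zero.mp h0 with h | h
    · rcases mul_eq_zero.mp h with h' | h'
      · exfalso; nlinarith
      · exact h'
    · linarith
  have hswsq : Real.sin ω * Real.sin ω = 1 := by nlinarith [Real.sin_sq_add_cos_sq ω]
  have A2 : 2 * Real.cos lam ^ 2 = 4 * L.re ^ 2 * Real.cos α ^ 2 := by
    linear_combination (2 * Real.sqrt 2 * Real.cos lam + 4 * L.re * Real.cos α) * h2re
      - Real.cos lam ^ 2 * hs2sq
  have B2 : 2 * Real.sin lam ^ 2 = 4 * L.re ^ 2 * Real.sin α ^ 2 := by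
    linear_combination (-4 * (Real.sqrt 2 / 2 * Real.sin ω * Real.sin lam)
        + 4 * (L.re * Real.sin α)) * h1im
      - (Real.sin ω ^ 2 * Real.sin lam ^ 2) * hs2sq - 2 * Real.sin lam ^ 2 * hswsq
  have hLre : L.re * L.re = 1 / 2 := by
    linear_combination (-1/4) * A2 + (-1/4) * B2 + (1/2) * Real.sin_sq_add_cos_sq lam
      - (L.re * L.re) * Real.sin_sq_add_cos_sq α
  have hLne : L.re ≠ 0 := fun h => hL (Complex.ext h him)
  clear h₁ h₂ hexp hL h2im h1re
  refine ⟨him, ?_, ?_, ?_⟩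
  · have hfac : (L.re - Real.sqrt 2 / 2) * (L.re + Real.sqrt 2 / 2) = 0 := by nlinarith
    rcases mul_eq_zero.mp hfac with h | h
    · left; rw [Complex.ext_iff]; constructor
      · simp; linarith
      · simp [him]
    · right; rw [Complex.ext_iff]; constructor
      · simp; linarith
      · simp [him]
  · rcases (Real.cos_eq_zero_iff).mp hcw with ⟨k, hk⟩
    obtain ⟨h0, h2pi⟩ := hω
    rw [hk] at h0 h2pi
    have hge : (0:ℝ) ≤ 2*(k:ℝ)+1 := by nlinarith
    have hlt : (2*(k:ℝ)+1) < 4 := by nlinarith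
    have hk0 : (0:ℤ) ≤ k := by
      by_contra h
      push_neg at h
      have hk' : k ≤ -1 := by omega
      have : (k:ℝ) ≤ -1 := by exact_mod_cast hk' 
      linarith
    have hk1 : k ≤ (1:ℤ) := by
      by_contra h
      push_neg at h
      have : (2:ℝ) ≤ (k:ℝ) := by exact_mod_cast (by omega : (2:ℤ) ≤ k)
      linarith
    interval_cases k
    · left; push_cast at hk; linarith
    · right; push_cast at hk; linarith
  · have habs : Real.sin lam * |Real.cos α| = Real.cos lam * |Real.sin α| := by
      have hsw : |Real.sin ω| = 1 := by
        rcases mul_self_eq_one_iff.mp hswsq with h | h <;> rw [h] <;> norm_num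
      have e1 : Real.sqrt 2 / 2 * Real.sin lam = |L.re| * |Real.sin α| := by
        have h := congrArg (fun x : ℝ => |x|) h1im
        rw [abs_neg, abs_mul, abs_mul, abs_mul, hsw,
          abs_of_pos (show (0:ℝ) < Real.sqrt 2 / 2 by positivity), abs_of_pos hsl] at h
        linarith [h]
      have e2 : Real.sqrt 2 / 2 * Real.cos lam = |L.re| * |Real.cos α| := by
        have h := congrArg (fun x : ℝ => |x|) h2re
        rw [abs_mul, abs_mul,
          abs_of_pos (show (0:ℝ) < Real.sqrt 2 / 2 by positivity), abs_of_pos hcl] at h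
        exact h
      have p1 : Real.sqrt 2 / 2 * Real.sin lam * |Real.cos α| = |L.re| * |Real.sin α| * |Real.cos α| := by rw [e1]
      have p2 : Real.sqrt 2 / 2 * Real.cos lam * |Real.sin α| = |L.re| * |Real.cos α| * |Real.sin α| := by rw [e2]
      have key : Real.sqrt 2 / 2 * (Real.sin lam * |Real.cos α|) = Real.sqrt 2 / 2 * (Real.cos lam * |Real.sin α|) := by
        linear_combination p1 - p2
      exact mul_left_cancel₀ (by positivity) key
    have hclne : |Real.cos lam| ≠ 0 := abs_ne_zero.mpr (ne_of_gt hcl)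
    have hcane : |Real.cos α| ≠ 0 := abs_ne_zero.mpr hcos
    rw [Real.tan_eq_sin_div_cos, Real.tan_eq_sin_div_cos, abs_div, abs_div]
    rw [div_eq_div_iff hclne hcane]
    rw [abs_of_pos hsl, abs_of_pos hcl]
    linarith [habs]
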